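/- Let A be a positively graded, locally finite algebra generated in degrees 0 and 1 such that A is a projective A_0-module and A_0 satisfies the splitting property (S). Then every Koszul A-module M is projective as an A_0-module. -/

import Mathlib

set_option linter.unusedSectionVars false
set_option maxHeartbeats 1000000
set_option synthInstance.maxHeartbeats 400000

section Aux

/-- Transitivity of projectivity. -/
theorem projective_trans' (R S M : Type*) [Semiring R] [Semiring S] [AddCommMonoid M]
    [Module R M] [Module S M] [Module R S] [IsScalarTower R S M] [IsScalarTower R S S]
    (h1 : Module.Projective R S) (h2 : Module.Projective S M) :
    Module.Projective R M := by
  classical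
  obtain ⟨s, hs⟩ := h2
  haveI := h1
  haveI : Module.Projective R (Π₀ _ : M, S) := inferInstance
  haveI : Module.Projective R (M →₀ S) :=
    Module.Projective.of_equiv (M := Π₀ _ : M, S)
      (finsuppLequivDFinsupp (ι := M) (M := S) R).symm
  exact Module.Projective.of_split (s.restrictScalars R)
    ((Finsupp.linearCombination S id).restrictScalars R)
    (LinearMap.ext fun x => hs x)

theorem projective_of_isInternal_summand {R M : Type} [Ring R] [AddCommGroup M] [Module R M]
    (Q : ℕ → Submodule R M) (h : DirectSum.IsInternal Q) (hp : Module.Projective R M) (j : ℕ) :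
    Module.Projective R (Q j) := by
  haveI := hp
  let e := LinearEquiv.ofBijective (DirectSum.coeLinearMap Q) h
  refine Module.Projective.of_split (M := M) (Q j).subtype
    ((DirectSum.component R ℕ (fun i => Q i) j) ∘ₗ e.symm.toLinearMap) ?_
  ext x
  have h1 : e (DirectSum.of (fun i => ↥(Q i)) j x) = (x : M) := DirectSum.coeLinearMap_of Q j x
  have h2 : e.symm (x : M) = DirectSum.of (fun i => ↥(Q i)) j x := by
    rw [← h1, e.symm_apply_apply]
  simp only [LinearMap.comp_apply, Submodule.coe_subtype, LinearEquiv.coe_coe,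
    LinearMap.id_coe, id_eq]
  rw [h2, ← DirectSum.lof_eq_of (M := fun i => ↥(Q i)) R]
  exact congrArg Subtype.val (DirectSum.component.lof_self (R := R) (M := fun i => ↥(Q i)) j x)

theorem split_of_injective_aux.{v} {R : Type} [Ring R]
    (hS : ∀ (X Y : Type v) [AddCommGroup X] [AddCommGroup Y]
      [Module R X] [Module R Y] (f : X →ₗ[R] Y),
      Module.Projective R X → Module.Projective R Y → Function.Injective f →
      ∃ g : Y →ₗ[R] X, g.comp f = LinearMap.id)
    (X Y : Type) [AddCommGroup X] [AddCommGroup Y] [Module R X] [Module R Y]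
    (f : X →ₗ[R] Y) (hX : Module.Projective R X) (hY : Module.Projective R Y)
    (hf : Function.Injective f) : ∃ g : Y →ₗ[R] X, g.comp f = LinearMap.id := by
  let eX : ULift.{v} X ≃ₗ[R] X := ULift.moduleEquiv
  let eY : ULift.{v} Y ≃ₗ[R] Y := ULift.moduleEquiv
  haveI := hX; haveI := hY
  have hX' : Module.Projective R (ULift.{v} X) := Module.Projective.of_equiv eX.symm
  have hY' : Module.Projective R (ULift.{v} Y) := Module.Projective.of_equiv eY.symm
  obtain ⟨g', hg'⟩ := hS (ULift.{v} X) (ULift.{v} Y)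
    (eY.symm.toLinearMap ∘ₗ f ∘ₗ eX.toLinearMap) hX' hY'
    (by
      simp only [LinearMap.coe_comp, LinearEquiv.coe_coe]
      exact eY.symm.injective.comp (hf.comp eX.injective))
  refine ⟨eX.toLinearMap ∘ₗ g' ∘ₗ eY.symm.toLinearMap, ?_⟩
  ext x
  have h := LinearMap.congr_fun hg' (eX.symm x)
  simp only [LinearMap.comp_apply, LinearMap.id_apply, LinearEquiv.coe_coe] at h ⊢
  rw [eX.apply_symm_apply] at h
  rw [h, eX.apply_symm_apply]

theorem graded_preimage {R P N : Type} [Ring R] [AddCommGroup P] [Module R P]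
    [AddCommGroup N] [Module R N]
    (Pg : ℕ → Submodule R P) (hPsup : iSup Pg = ⊤) (hPind : iSupIndep Pg)
    (Ng : ℕ → Submodule R N) (hNsup : iSup Ng = ⊤) (hNind : iSupIndep Ng)
    (f : P →ₗ[R] N) (hf : ∀ (j : ℕ) (x : P), x ∈ Pg j → f x ∈ Ng j)
    (n : ℕ) (y : N) (hy : y ∈ Ng n) (x : P) (hfx : f x = y) :
    ∃ x' ∈ Pg n, f x' = y := by
  letI dP : DirectSum.Decomposition Pg :=
    (DirectSum.isInternal_submodule_of_iSupIndep_of_iSup_eq_top hPind hPsup).chooseDecomposition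
  letI dN : DirectSum.Decomposition Ng :=
    (DirectSum.isInternal_submodule_of_iSupIndep_of_iSup_eq_top hNind hNsup).chooseDecomposition
  have key : ∀ z : P,
      ((DirectSum.decompose Ng (f z) n : Ng n) : N) =
        f ((DirectSum.decompose Pg z n : Pg n) : P) := by
    intro z
    have hz : z ∈ iSup Pg := hPsup ▸ Submodule.mem_top
    refine Submodule.iSup_induction _
      (motive := fun z => ((DirectSum.decompose Ng (f z) n : Ng n) : N) =
        f ((DirectSum.decompose Pg z n : Pg n) : P)) hz ?_ ?_ ?_
    · intro j w hw
      by_cases hj : j = n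
      · subst hj
        rw [DirectSum.decompose_of_mem_same Pg hw, DirectSum.decompose_of_mem_same Ng (hf j w hw)]
      · rw [DirectSum.decompose_of_mem_ne Pg hw hj, DirectSum.decompose_of_mem_ne Ng (hf j w hw) hj,
          map_zero]
    · simp
    · intro u v hu hv
      rw [map_add, DirectSum.decompose_add, DirectSum.decompose_add, DirectSum.add_apply,
        DirectSum.add_apply, Submodule.coe_add, Submodule.coe_add, map_add, hu, hv]
  refine ⟨((DirectSum.decompose Pg x n : Pg n) : P), (DirectSum.decompose Pg x n).2, ?_⟩
  rw [← key x, hfx, DirectSum.decompose_of_mem_same Ng hy]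

end Aux

section Promote

variable {k A : Type} [Field k] [Ring A] [Algebra k A]
variable {𝒜 : ℕ → Submodule k A} {A₀ : Subalgebra k A}
variable {N : Type} [AddCommGroup N] [Module k N] [Module A N] [IsScalarTower k A N]

/-- Promote a single `k`-submodule stable under `A₀` to an `A₀`-submodule. -/
def promote1 (hA₀ : A₀.toSubmodule = 𝒜 0) (T : Submodule k N)
    (hst : ∀ (a : A) (x : N), a ∈ 𝒜 0 → x ∈ T → a • x ∈ T) :
    Submodule A₀ N where
  carrier := T
  add_mem' := fun ha hb => T.add_mem ha hb
  zero_mem' := T.zero_mem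
  smul_mem' := fun a x hx => hst a x (by rw [← hA₀] at *; exact a.2) hx

/-- Promote a single `k`-submodule stable under all of `A` to an `A`-submodule. -/
def promoteA (T : Submodule k N)
    (hst : ∀ (a : A) (x : N), x ∈ T → a • x ∈ T) :
    Submodule A N where
  carrier := T
  add_mem' := fun ha hb => T.add_mem ha hb
  zero_mem' := T.zero_mem
  smul_mem' := fun a x hx => hst a x hx

/-- Promote a family of `k`-submodules stable under `A₀` to `A₀`-submodules. -/
def promote (hA₀ : A₀.toSubmodule = 𝒜 0) (𝒩 : ℕ → Submodule k N)
    (hst : ∀ (j : ℕ) (a : A) (x : N), a ∈ 𝒜 0 → x ∈ 𝒩 j → a • x ∈ 𝒩 j) (j : ℕ) :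
    Submodule A₀ N where
  carrier := 𝒩 j
  add_mem' := fun ha hb => (𝒩 j).add_mem ha hb
  zero_mem' := (𝒩 j).zero_mem
  smul_mem' := fun a x hx => hst j a x (by rw [← hA₀] at *; exact a.2) hx

@[simp] lemma mem_promote (hA₀ : A₀.toSubmodule = 𝒜 0) (𝒩 : ℕ → Submodule k N)
    (hst : ∀ (j : ℕ) (a : A) (x : N), a ∈ 𝒜 0 → x ∈ 𝒩 j → a • x ∈ 𝒩 j) (j : ℕ) (x : N) :
    x ∈ promote hA₀ 𝒩 hst j ↔ x ∈ 𝒩 j := Iff.rfl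

theorem promote_isInternal (hA₀ : A₀.toSubmodule = 𝒜 0) (𝒩 : ℕ → Submodule k N)
    (hst : ∀ (j : ℕ) (a : A) (x : N), a ∈ 𝒜 0 → x ∈ 𝒩 j → a • x ∈ 𝒩 j)
    (hsup : iSup 𝒩 = ⊤) (hind : iSupIndep 𝒩) :
    DirectSum.IsInternal (promote hA₀ 𝒩 hst) := by
  apply DirectSum.isInternal_submodule_of_iSupIndep_of_iSup_eq_top
  · intro i
    rw [disjoint_iff, Submodule.eq_bot_iff]
    rintro x ⟨hx1, hx2⟩
    have hK : ∀ (a : A) (y : N), a ∈ 𝒜 0 → y ∈ (⨆ j, ⨆ (_ : j ≠ i), 𝒩 j) →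
        a • y ∈ (⨆ j, ⨆ (_ : j ≠ i), 𝒩 j) := by
      intro a y ha hy
      refine Submodule.iSup_induction _ (motive := fun y => a • y ∈ _) hy ?_ ?_ ?_
      · intro j z hz
        by_cases h : j ≠ i
        · rw [iSup_pos h] at hz
          exact Submodule.mem_iSup_of_mem j
            (by rw [iSup_pos h]; exact hst _ _ _ ha hz)
        · rw [iSup_neg h] at hz
          simp only [Submodule.mem_bot] at hz
          simp [hz]
      · simp
      · intro u v hu hv; rw [smul_add]; exact Submodule.add_mem _ hu hv
    set K' : Submodule A₀ N := promote1 hA₀ (⨆ j, ⨆ (_ : j ≠ i), 𝒩 j)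
      (fun a y ha hy => hK a y ha hy) with hK'
    have hle : (⨆ j, ⨆ (_ : j ≠ i), promote hA₀ 𝒩 hst j) ≤ K' := by
      refine iSup_le fun j => iSup_le fun hj => ?_
      intro z hz
      show z ∈ (⨆ j, ⨆ (_ : j ≠ i), 𝒩 j)
      exact Submodule.mem_iSup_of_mem j (by rw [iSup_pos hj]; exact hz)
    exact Submodule.disjoint_def.mp (hind i) x hx1 (hle hx2)
  · rw [eq_top_iff]
    intro x _
    have hx : x ∈ iSup 𝒩 := hsup ▸ Submodule.mem_top
    refine Submodule.iSup_induction _ (motive := fun y => y ∈ ⨆ j, promote hA₀ 𝒩 hst j) hx ?_ ?_ ?_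
    · intro j z hz
      exact Submodule.mem_iSup_of_mem j hz
    · simp
    · intro u v hu hv; exact Submodule.add_mem _ hu hv

end Promote

theorem graded_piece_eq_bot {k A : Type} [Field k] [Ring A] [Algebra k A]
    (𝒜 : ℕ → Submodule k A) [GradedAlgebra 𝒜]
    {P : Type} [AddCommGroup P] [Module k P] [Module A P] [IsScalarTower k A P]
    (Pg : ℕ → Submodule k P) (hind : iSupIndep Pg)
    (hsmul : ∀ (m j : ℕ) (a : A) (x : P), a ∈ 𝒜 m → x ∈ Pg j → a • x ∈ Pg (m + j))
    (i : ℕ) (hgen : Submodule.span A ((Pg i : Set P)) = ⊤) :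
    ∀ j, j < i → Pg j = ⊥ := by
  set T : Submodule k P := ⨆ m, Pg (m + i) with hT
  have hTst1 : ∀ (m : ℕ) (a : A), a ∈ 𝒜 m → ∀ x ∈ T, a • x ∈ T := by
    intro m a ha x hx
    refine Submodule.iSup_induction _ (motive := fun x => a • x ∈ T) hx ?_ (by simp) ?_
    · intro m' z hz
      have h2 := hsmul m (m' + i) a z ha hz
      rw [← add_assoc] at h2
      exact Submodule.mem_iSup_of_mem (m + m') h2
    · intro u v hu hv; rw [smul_add]; exact T.add_mem hu hv
  have hTst : ∀ (a : A) (x : P), x ∈ T → a • x ∈ T := by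
    intro a x hx
    set S : Submodule k A :=
      { carrier := {a : A | a • x ∈ T}
        add_mem' := fun {u v} hu hv => by
          simp only [Set.mem_setOf_eq] at *
          rw [add_smul]; exact T.add_mem hu hv
        zero_mem' := by simp only [Set.mem_setOf_eq, zero_smul]; exact T.zero_mem
        smul_mem' := fun c u hu => by
          simp only [Set.mem_setOf_eq] at *
          rw [smul_assoc]
          exact T.smul_mem c hu } with hS
    have hall : ∀ m, 𝒜 m ≤ S := fun m a' ha' => hTst1 m a' ha' x hx
    have htop : (⊤ : Submodule k A) ≤ S := by
      rw [← (DirectSum.Decomposition.isInternal 𝒜).submodule_iSup_eq_top]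
      exact iSup_le hall
    exact htop Submodule.mem_top
  have hTA : promoteA T hTst = ⊤ := by
    rw [eq_top_iff, ← hgen, Submodule.span_le]
    intro z hz
    show z ∈ T
    exact Submodule.mem_iSup_of_mem 0 (show z ∈ Pg (0 + i) by rw [zero_add]; exact hz)
  intro j hj
  rw [Submodule.eq_bot_iff]
  intro x hx
  have hxT : x ∈ T := by
    have hx' : x ∈ promoteA T hTst := hTA ▸ Submodule.mem_top
    exact hx'
  have hle : T ≤ ⨆ l, ⨆ (_ : l ≠ j), Pg l :=
    iSup_le fun m => le_iSup_of_le (m + i) (by rw [iSup_pos (by omega : m + i ≠ j)])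
  exact Submodule.disjoint_def.mp (hind j) x hx (hle hxT)

/-- A linear (graded) projective resolution `⋯ → P¹ → P⁰ → M → 0` of a graded module `M`
over a graded algebra `A = ⊕ 𝒜 i`: each `P i` is a graded projective `A`-module generated
in degree `i`, the differentials and augmentation are degree-preserving, and the complex
is exact. -/
structure LinearProjectiveResolution
    (k A : Type) [Field k] [Ring A] [Algebra k A] (𝒜 : ℕ → Submodule k A)
    (M : Type) [AddCommGroup M] [Module k M] [Module A M] [IsScalarTower k A M]
    (ℳ : ℕ → Submodule k M) : Type 1 where
  P : ℕ → Type
  [acg : ∀ i, AddCommGroup (P i)]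
  [modk : ∀ i, Module k (P i)]
  [modA : ∀ i, Module A (P i)]
  [tower : ∀ i, IsScalarTower k A (P i)]
  Pgr : ∀ i, ℕ → Submodule k (P i)
  Pgr_sup : ∀ i, iSup (Pgr i) = ⊤
  Pgr_indep : ∀ i, iSupIndep (Pgr i)
  Pgr_smul : ∀ (i n j : ℕ) (a : A) (x : P i), a ∈ 𝒜 n → x ∈ Pgr i j →
    a • x ∈ Pgr i (n + j)
  proj : ∀ i, Module.Projective A (P i)
  gen : ∀ i, Submodule.span A (Pgr i i : Set (P i)) = ⊤
  ε : P 0 →ₗ[A] M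
  d : ∀ i, P (i + 1) →ₗ[A] P i
  ε_gr : ∀ (j : ℕ) (x : P 0), x ∈ Pgr 0 j → ε x ∈ ℳ j
  d_gr : ∀ (i j : ℕ) (x : P (i + 1)), x ∈ Pgr (i + 1) j → d i x ∈ Pgr i j
  ε_surj : Function.Surjective ε
  exact0 : LinearMap.range (d 0) = LinearMap.ker ε
  exact : ∀ i, LinearMap.range (d (i + 1)) = LinearMap.ker (d i)

/-- A graded module `M` over the graded algebra `A = ⊕ 𝒜 i` (the family `ℳ` being an
internal grading compatible with the one of `A`) is *Koszul* if it is generated in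
degree 0 and admits a linear projective resolution. -/
def IsKoszulModule
    (k A : Type) [Field k] [Ring A] [Algebra k A] (𝒜 : ℕ → Submodule k A)
    (M : Type) [AddCommGroup M] [Module k M] [Module A M] [IsScalarTower k A M]
    (ℳ : ℕ → Submodule k M) : Prop :=
  iSup ℳ = ⊤ ∧ iSupIndep ℳ ∧
  (∀ (i j : ℕ) (a : A) (x : M), a ∈ 𝒜 i → x ∈ ℳ j → a • x ∈ ℳ (i + j)) ∧
  Submodule.span A (ℳ 0 : Set M) = ⊤ ∧
  Nonempty (LinearProjectiveResolution k A 𝒜 M ℳ)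

/-- The grading of the quotient module `A₀ = A/J` (concentrated in degree 0). -/
def degreeZeroGrading (k A : Type) [Field k] [Ring A] [Algebra k A]
    (𝒜 : ℕ → Submodule k A) : ℕ → Submodule k
      (A ⧸ (Submodule.span A (⋃ n : ℕ, (𝒜 (n + 1) : Set A)) : Submodule A A))
  | 0 => ⊤
  | _ + 1 => ⊥

/-- The graded algebra `A` is a *Koszul algebra* if `A₀ = A/J`, viewed as a graded
`A`-module concentrated in degree 0, is a Koszul module. -/
def IsKoszulAlgebra (k A : Type) [Field k] [Ring A] [Algebra k A]
    (𝒜 : ℕ → Submodule k A) : Prop :=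
  IsKoszulModule k A 𝒜
    (A ⧸ (Submodule.span A (⋃ n : ℕ, (𝒜 (n + 1) : Set A)) : Submodule A A))
    (degreeZeroGrading k A 𝒜)

universe w

/-- Let `A` be a positively graded, locally finite algebra generated in
degrees 0 and 1 such that `A` is a projective `A₀`-module and `A₀` satisfies the
splitting property (S).  Then every Koszul `A`-module `M` is projective as an
`A₀`-module. -/
theorem stmt10
    {k A : Type} [Field k] [Ring A] [Algebra k A]
    (𝒜 : ℕ → Submodule k A) [GradedAlgebra 𝒜]
    (hlf : ∀ i, FiniteDimensional k (𝒜 i))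
    (hgen : ∀ i, 𝒜 1 * 𝒜 i = 𝒜 (i + 1))
    (A₀ : Subalgebra k A) (hA₀ : A₀.toSubmodule = 𝒜 0)
    -- `A` is a projective `A₀`-module
    (hAproj : Module.Projective A₀ A)
    -- the splitting property (S)
    (hS : ∀ (X Y : Type w) [AddCommGroup X] [AddCommGroup Y]
      [Module A₀ X] [Module A₀ Y] (f : X →ₗ[A₀] Y),
      Module.Projective A₀ X → Module.Projective A₀ Y → Function.Injective f →
      ∃ g : Y →ₗ[A₀] X, g.comp f = LinearMap.id)
    -- `M` is a Koszul `A`-module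
    {M : Type} [AddCommGroup M] [Module k M] [Module A M] [IsScalarTower k A M]
    (ℳ : ℕ → Submodule k M)
    (hM : IsKoszulModule k A 𝒜 M ℳ) :
    Module.Projective A₀ M := by
  classical
  obtain ⟨hsup, hind, hsmul, hgen0, ⟨Rr⟩⟩ := hM
  letI : ∀ i, AddCommGroup (Rr.P i) := Rr.acg
  letI : ∀ i, Module k (Rr.P i) := Rr.modk
  letI : ∀ i, Module A (Rr.P i) := Rr.modA
  letI : ∀ i, IsScalarTower k A (Rr.P i) := Rr.tower
  -- stability of the gradings under `A₀`
  have hstM : ∀ (j : ℕ) (a : A) (x : M), a ∈ 𝒜 0 → x ∈ ℳ j → a • x ∈ ℳ j := by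
    intro j a x ha hx
    have := hsmul 0 j a x ha hx
    simpa using this
  have hstP : ∀ (i j : ℕ) (a : A) (x : Rr.P i), a ∈ 𝒜 0 → x ∈ Rr.Pgr i j →
      a • x ∈ Rr.Pgr i j := by
    intro i j a x ha hx
    have := Rr.Pgr_smul i 0 j a x ha hx
    simpa using this
  -- promoted gradings
  set NM : ℕ → Submodule A₀ M := promote hA₀ ℳ hstM with hNM
  have hIntM : DirectSum.IsInternal NM := promote_isInternal hA₀ ℳ hstM hsup hind
  have hIntP : ∀ i, DirectSum.IsInternal (promote hA₀ (Rr.Pgr i) (hstP i)) :=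
    fun i => promote_isInternal hA₀ (Rr.Pgr i) (hstP i) (Rr.Pgr_sup i) (Rr.Pgr_indep i)
  -- each `P i` is `A₀`-projective
  have projP : ∀ i, Module.Projective A₀ (Rr.P i) := fun i =>
    projective_trans' A₀ A (Rr.P i) hAproj (Rr.proj i)
  -- vanishing of low graded pieces
  have hbot : ∀ i j, j < i → Rr.Pgr i j = ⊥ := fun i =>
    graded_piece_eq_bot 𝒜 (Rr.Pgr i) (Rr.Pgr_indep i) (Rr.Pgr_smul i) i (Rr.gen i)
  -- the main claim: each graded piece of `M` is `A₀`-projective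
  have main : ∀ n, Module.Projective A₀ (NM n) := by
    intro n
    set Q : ∀ i, Submodule A₀ (Rr.P i) := fun i => promote hA₀ (Rr.Pgr i) (hstP i) n with hQ
    have projQ : ∀ i, Module.Projective A₀ (Q i) := fun i =>
      projective_of_isInternal_summand _ (hIntP i) (projP i) n
    set δ : ∀ i, Q (i + 1) →ₗ[A₀] Q i := fun i =>
      ((Rr.d i).restrictScalars A₀).restrict (fun x hx => Rr.d_gr i n x hx) with hδ
    set ε' : Q 0 →ₗ[A₀] NM n :=
      ((Rr.ε).restrictScalars A₀).restrict (fun x hx => Rr.ε_gr n x hx) with hε'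
    -- exactness of the degree-`n` strand
    have hker : ∀ i, LinearMap.ker (δ i) = LinearMap.range (δ (i + 1)) := by
      intro i
      ext x
      constructor
      · intro hx
        have hx0 : (Rr.d i) (x : Rr.P (i + 1)) = 0 := congrArg Subtype.val hx
        have hxk : (x : Rr.P (i + 1)) ∈ LinearMap.ker (Rr.d i) := hx0
        rw [← Rr.exact i] at hxk
        obtain ⟨z, hz⟩ := hxk
        obtain ⟨x', hx'1, hx'2⟩ := graded_preimage (Rr.Pgr (i + 2)) (Rr.Pgr_sup (i + 2))
          (Rr.Pgr_indep (i + 2)) (Rr.Pgr (i + 1)) (Rr.Pgr_sup (i + 1)) (Rr.Pgr_indep (i + 1))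
          ((Rr.d (i + 1)).restrictScalars k) (fun j w hw => Rr.d_gr (i + 1) j w hw)
          n (x : Rr.P (i + 1)) x.2 z hz
        exact ⟨⟨x', hx'1⟩, Subtype.ext hx'2⟩
      · rintro ⟨y, rfl⟩
        have hy : (Rr.d (i + 1)) (y : Rr.P (i + 2)) ∈ LinearMap.ker (Rr.d i) := by
          rw [← Rr.exact i]
          exact ⟨(y : Rr.P (i + 2)), rfl⟩
        exact Subtype.ext hy
    have hker0 : LinearMap.ker ε' = LinearMap.range (δ 0) := by
      ext x
      constructor
      · intro hx
        have hx0 : (Rr.ε) (x : Rr.P 0) = 0 := congrArg Subtype.val hx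
        have hxk : (x : Rr.P 0) ∈ LinearMap.ker Rr.ε := hx0
        rw [← Rr.exact0] at hxk
        obtain ⟨z, hz⟩ := hxk
        obtain ⟨x', hx'1, hx'2⟩ := graded_preimage (Rr.Pgr 1) (Rr.Pgr_sup 1)
          (Rr.Pgr_indep 1) (Rr.Pgr 0) (Rr.Pgr_sup 0) (Rr.Pgr_indep 0)
          ((Rr.d 0).restrictScalars k) (fun j w hw => Rr.d_gr 0 j w hw)
          n (x : Rr.P 0) x.2 z hz
        exact ⟨⟨x', hx'1⟩, Subtype.ext hx'2⟩
      · rintro ⟨y, rfl⟩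
        have hy : (Rr.d 0) (y : Rr.P 1) ∈ LinearMap.ker Rr.ε := by
          rw [← Rr.exact0]
          exact ⟨(y : Rr.P 1), rfl⟩
        exact Subtype.ext hy
    have hsurj : Function.Surjective ε' := by
      rintro ⟨y, hy⟩
      obtain ⟨x, hx⟩ := Rr.ε_surj y
      obtain ⟨x', hx'1, hx'2⟩ := graded_preimage (Rr.Pgr 0) (Rr.Pgr_sup 0)
        (Rr.Pgr_indep 0) ℳ hsup hind
        ((Rr.ε).restrictScalars k) (fun j w hw => Rr.ε_gr j w hw) n y hy x hx
      exact ⟨⟨x', hx'1⟩, Subtype.ext hx'2⟩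
    -- downward induction on the strand
    have Hm : ∀ (m i : ℕ), n ≤ i + m →
        Module.Projective A₀ (Q i ⧸ LinearMap.range (δ i)) := by
      intro m
      induction m with
      | zero =>
        intro i hi
        have hbot' : LinearMap.range (δ i) = ⊥ := by
          rw [Submodule.eq_bot_iff]
          rintro y ⟨x, rfl⟩
          have hx : (x : Rr.P (i + 1)) ∈ Rr.Pgr (i + 1) n := x.2
          rw [hbot (i + 1) n (by omega)] at hx
          have hx0 : x = 0 := Subtype.ext hx
          rw [hx0, map_zero]
        haveI := projQ i
        exact Module.Projective.of_equiv (Submodule.quotEquivOfEqBot _ hbot').symm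
      | succ m IH =>
        intro i hi
        haveI hQ1 : Module.Projective A₀ (Q (i + 1) ⧸ LinearMap.range (δ (i + 1))) :=
          IH (i + 1) (by omega)
        have e2 := (δ i).quotKerEquivRange
        rw [hker i] at e2
        haveI hrangeproj : Module.Projective A₀ (LinearMap.range (δ i)) :=
          Module.Projective.of_equiv e2
        obtain ⟨g, hg⟩ := split_of_injective_aux hS (LinearMap.range (δ i)) (Q i)
          (LinearMap.range (δ i)).subtype hrangeproj (projQ i)
          (Submodule.injective_subtype _)
        set r : Q i →ₗ[A₀] Q i :=
          LinearMap.id - (LinearMap.range (δ i)).subtype ∘ₗ g with hr'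
        have hrker : LinearMap.range (δ i) ≤ LinearMap.ker r := by
          intro x hx
          have hgx : g x = ⟨x, hx⟩ := LinearMap.congr_fun hg ⟨x, hx⟩
          rw [LinearMap.mem_ker, hr', LinearMap.sub_apply, LinearMap.comp_apply, hgx]
          simp
        set h' := (LinearMap.range (δ i)).liftQ r hrker with hh'
        have hsplit : (LinearMap.range (δ i)).mkQ ∘ₗ h' = LinearMap.id := by
          ext x
          simp only [LinearMap.comp_apply, Submodule.mkQ_apply, LinearMap.id_apply]
          rw [hh', Submodule.liftQ_apply, hr', LinearMap.sub_apply, LinearMap.id_apply]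
          have hmem : ((LinearMap.range (δ i)).subtype ∘ₗ g) x ∈ LinearMap.range (δ i) :=
            ((g x)).2
          rw [Submodule.Quotient.mk_sub, (Submodule.Quotient.mk_eq_zero _).mpr hmem, sub_zero]
        haveI := projQ i
        exact Module.Projective.of_split h' (LinearMap.range (δ i)).mkQ hsplit
    -- conclude for the graded piece
    have e3 := LinearMap.quotKerEquivOfSurjective ε' hsurj
    rw [hker0] at e3
    haveI := Hm n 0 (by omega)
    exact Module.Projective.of_equiv e3
  -- assemble: `M` is the direct sum of its graded pieces
  haveI : ∀ n, Module.Projective A₀ (NM n) := main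
  haveI : Module.Projective A₀ (DirectSum ℕ fun n => NM n) := by
    have h : Module.Projective A₀ (Π₀ n, NM n) := inferInstance
    exact h
  exact Module.Projective.of_equiv (LinearEquiv.ofBijective (DirectSum.coeLinearMap NM) hIntM)
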